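/- The convex envelope of the symmetric double-well function g(m) = -m²/2 - I(m)/β for β > 1 is constant (flat) on the interval [-m*, m*], where m* is the positive solution of m = tanh(β m), and coincides with g outside this interval. -/

import Mathlib

noncomputable def binEntropy (m : ℝ) : ℝ :=
  -((1 - m) / 2) * Real.log ((1 - m) / 2) - ((1 + m) / 2) * Real.log ((1 + m) / 2)

noncomputable def meanFieldFreeEnergy (β m : ℝ) : ℝ := -m ^ 2 / 2 - binEntropy m / β

/-- The convex envelope (largest convex minorant) of `meanFieldFreeEnergy β` on `(-1,1)`. -/
noncomputable def convexEnvelope (β m : ℝ) : ℝ :=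
  sSup {y : ℝ | ∃ φ : ℝ → ℝ, ConvexOn ℝ (Set.Ioo (-1 : ℝ) 1) φ ∧
    (∀ x ∈ Set.Ioo (-1 : ℝ) 1, φ x ≤ meanFieldFreeEnergy β x) ∧ y = φ m}

open Set

section Aux

lemma binEntropy_neg (m : ℝ) : _root_.binEntropy (-m) = _root_.binEntropy m := by
  unfold binEntropy; ring_nf

lemma mffe_neg (β m : ℝ) : meanFieldFreeEnergy β (-m) = meanFieldFreeEnergy β m := by
  unfold meanFieldFreeEnergy; rw [binEntropy_neg]; ring

noncomputable def Lfun (m : ℝ) : ℝ := Real.log (1 + m) - Real.log (1 - m)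

noncomputable def gdf (β m : ℝ) : ℝ := -m + Lfun m / (2 * β)

noncomputable def hf (β x : ℝ) : ℝ := Lfun x - 2 * β * x

lemma gdf_eq {β : ℝ} (hβ : 0 < β) (m : ℝ) : gdf β m = hf β m / (2 * β) := by
  unfold gdf hf; field_simp; ring

lemma hasDerivAt_binEntropy {m : ℝ} (h1 : -1 < m) (h2 : m < 1) :
    HasDerivAt binEntropy (-(Lfun m / 2)) m := by
  have hu : (0:ℝ) < 1 - m := by linarith
  have hv : (0:ℝ) < 1 + m := by linarith
  have du : HasDerivAt (fun x : ℝ => (1 - x) / 2) (-1 / 2) m := by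
    simpa using ((hasDerivAt_const m (1:ℝ)).sub (hasDerivAt_id m)).div_const 2
  have dv : HasDerivAt (fun x : ℝ => (1 + x) / 2) (1 / 2) m := by
    simpa using ((hasDerivAt_const m (1:ℝ)).add (hasDerivAt_id m)).div_const 2
  have hu0 : (1 - m) / 2 ≠ 0 := by positivity
  have hv0 : (1 + m) / 2 ≠ 0 := by positivity
  have dlu := du.log hu0
  have dlv := dv.log hv0
  have D := ((du.neg.mul dlu).sub (dv.mul dlv))
  have : HasDerivAt binEntropy
      (-(-1/2) * Real.log ((1-m)/2) + -((1-m)/2) * ((-1/2) / ((1-m)/2)) -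
        (1/2 * Real.log ((1+m)/2) + (1+m)/2 * ((1/2) / ((1+m)/2)))) m := D
  convert this using 1
  rw [Real.log_div (by linarith) two_ne_zero, Real.log_div (by linarith) two_ne_zero]
  unfold Lfun
  field_simp
  ring

lemma hasDerivAt_mffe {β m : ℝ} (hβ : 0 < β) (h1 : -1 < m) (h2 : m < 1) :
    HasDerivAt (meanFieldFreeEnergy β) (gdf β m) m := by
  have h := ((hasDerivAt_pow 2 m).neg.div_const 2).sub
    ((hasDerivAt_binEntropy h1 h2).div_const β)
  have : HasDerivAt (meanFieldFreeEnergy β) (-(2 * m ^ 1) / 2 - (-(Lfun m / 2)) / β) m := h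
  convert this using 1
  unfold gdf
  field_simp
  ring

lemma hasDerivAt_Lfun {m : ℝ} (h1 : -1 < m) (h2 : m < 1) :
    HasDerivAt Lfun (1 / (1 + m) + 1 / (1 - m)) m := by
  have d1 : HasDerivAt (fun x : ℝ => 1 + x) 1 m := by
    exact (hasDerivAt_id' m).const_add 1
  have d2 : HasDerivAt (fun x : ℝ => 1 - x) (-1) m := by
    exact (hasDerivAt_id' m).const_sub 1
  have h := (d1.log (by linarith)).sub (d2.log (by linarith))
  rw [show 1 / (1 + m) + 1 / (1 - m) = 1 / (1 + m) - -1 / (1 - m) by ring]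
  exact h

end Aux

section Main
variable {β mstar : ℝ} (hβ : 1 < β) (h0 : 0 < mstar) (h1 : mstar < 1)
  (hsol : mstar = Real.tanh (β * mstar))

include hβ h0 hsol in
lemma key1 : Lfun mstar = 2 * β * mstar := by
  set t := β * mstar with ht
  have htpos : 0 < t := by positivity
  have hc : 0 < Real.cosh t := Real.cosh_pos t
  have e1 : 1 + mstar = Real.exp t / Real.cosh t := by
    rw [hsol, Real.tanh_eq_sinh_div_cosh, ← Real.cosh_add_sinh]
    field_simp
  have e2 : 1 - mstar = Real.exp (-t) / Real.cosh t := by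
    rw [hsol, Real.tanh_eq_sinh_div_cosh, ← Real.cosh_sub_sinh]
    field_simp
  unfold Lfun
  rw [e1, e2, Real.log_div (Real.exp_ne_zero t) hc.ne',
    Real.log_div (Real.exp_ne_zero (-t)) hc.ne', Real.log_exp, Real.log_exp]
  ring

include hβ h0 hsol in
lemma key2 : β * (1 - mstar ^ 2) ≤ 1 := by
  set t := β * mstar with ht
  have htpos : 0 < t := by positivity
  have hc : 0 < Real.cosh t := Real.cosh_pos t
  have hs : 0 < Real.sinh t := Real.sinh_pos_iff.mpr htpos
  have hcs : Real.cosh t ^ 2 - Real.sinh t ^ 2 = 1 := Real.cosh_sq_sub_sinh_sq t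
  have hm : mstar * Real.cosh t = Real.sinh t := by
    rw [hsol, Real.tanh_eq_sinh_div_cosh]; field_simp
  have hsinh2 : 2 * t ≤ Real.sinh (2 * t) := le_of_lt (Real.self_lt_sinh_iff.mpr (by linarith))
  rw [Real.sinh_two_mul] at hsinh2
  have h2 : t ≤ Real.sinh t * Real.cosh t := by nlinarith
  have hmm : mstar = Real.sinh t / Real.cosh t := by field_simp [← hm]; exact hm
  have h3 : 1 - mstar ^ 2 = 1 / Real.cosh t ^ 2 := by
    rw [hmm]; field_simp; exact hcs
  rw [h3, mul_one_div, div_le_one (by positivity)]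
  have hβm : β * mstar = t := rfl
  nlinarith [mul_pos hs hc]

include hβ in
lemma hasDerivAt_hf {x : ℝ} (hx1 : -1 < x) (hx2 : x < 1) :
    HasDerivAt (hf β) (1 / (1 + x) + 1 / (1 - x) - 2 * β) x := by
  exact (hasDerivAt_Lfun hx1 hx2).sub (by simpa using (hasDerivAt_id x).const_mul (2*β))

include hβ in
lemma hf_contOn {a b : ℝ} (ha : -1 < a) (hb : b < 1) : ContinuousOn (hf β) (Icc a b) := by
  intro x hx
  exact (hasDerivAt_hf hβ (by linarith [hx.1]) (by linarith [hx.2])).continuousAt.continuousWithinAt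

include hβ in
lemma hf_anti : AntitoneOn (hf β) (Icc 0 (Real.sqrt (1 - 1/β))) := by
  set c := Real.sqrt (1 - 1/β) with hc
  have hc2 : c ^ 2 = 1 - 1/β := Real.sq_sqrt (by rw [sub_nonneg, div_le_one (by linarith)]; linarith)
  have hc1 : c < 1 := by
    have h1β : 0 < 1/β := by positivity
    nlinarith [Real.sqrt_nonneg (1 - 1/β), h1β]
  apply antitoneOn_of_deriv_nonpos (convex_Icc 0 c) (hf_contOn hβ (by norm_num) hc1)
  · intro x hx
    rw [interior_Icc] at hx
    exact (hasDerivAt_hf hβ (by linarith [hx.1]) (by linarith [hx.2])).differentiableAt.differentiableWithinAt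
  · intro x hx
    rw [interior_Icc] at hx
    obtain ⟨hx0, hxc⟩ := hx
    rw [(hasDerivAt_hf hβ (by linarith) (by linarith)).deriv]
    have hxx : x ^ 2 < 1 - 1/β := by nlinarith [Real.sqrt_nonneg (1 - 1/β)]
    have h1x : 0 < 1 - x := by nlinarith
    have h2x : 0 < 1 + x := by linarith
    have hne : (1:ℝ) - x^2 ≠ 0 := by nlinarith
    have : 1 / (1 + x) + 1 / (1 - x) = 2 / (1 - x^2) := by field_simp; ring
    rw [this, sub_nonpos, div_le_iff₀ (by nlinarith)]
    have hb1 := mul_lt_mul_of_pos_left hxx (by linarith : (0:ℝ) < β)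
    have hb2 : β * (1 - 1/β) = β - 1 := by field_simp
    linarith

include hβ in
lemma hf_mono {b : ℝ} (hb : b < 1) : MonotoneOn (hf β) (Icc (Real.sqrt (1 - 1/β)) b) := by
  set c := Real.sqrt (1 - 1/β) with hc
  have hc2 : c ^ 2 = 1 - 1/β := Real.sq_sqrt (by rw [sub_nonneg, div_le_one (by linarith)]; linarith)
  have hc0 : 0 ≤ c := Real.sqrt_nonneg _
  apply monotoneOn_of_deriv_nonneg (convex_Icc c b) (hf_contOn hβ (by linarith) hb)
  · intro x hx
    rw [interior_Icc] at hx
    exact (hasDerivAt_hf hβ (by linarith [hx.1]) (by linarith [hx.2])).differentiableAt.differentiableWithinAt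
  · intro x hx
    rw [interior_Icc] at hx
    obtain ⟨hxc, hxb⟩ := hx
    rw [(hasDerivAt_hf hβ (by linarith) (by linarith)).deriv]
    have hxx : 1 - 1/β < x ^ 2 := by nlinarith
    have h1x : 0 < 1 - x := by linarith
    have h2x : 0 < 1 + x := by linarith
    have hne : (1:ℝ) - x^2 ≠ 0 := by nlinarith
    have : 1 / (1 + x) + 1 / (1 - x) = 2 / (1 - x^2) := by field_simp; ring
    rw [this, sub_nonneg, le_div_iff₀ (by nlinarith)]
    have hb1 := mul_lt_mul_of_pos_left hxx (by linarith : (0:ℝ) < β)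
    have hb2 : β * (1 - 1/β) = β - 1 := by field_simp
    linarith

include hβ h0 h1 hsol in
lemma c_le_mstar : Real.sqrt (1 - 1/β) ≤ mstar := by
  have k2 := key2 hβ h0 hsol
  have hb2 : β * (1 - 1/β) = β - 1 := by field_simp
  have hsq : 1 - 1/β ≤ mstar ^ 2 := by nlinarith
  calc Real.sqrt (1 - 1/β) ≤ Real.sqrt (mstar ^ 2) := Real.sqrt_le_sqrt hsq
    _ = mstar := by rw [Real.sqrt_sq h0.le]

include hβ h0 hsol in
lemma hf_star_zero : hf β mstar = 0 := by
  unfold hf; rw [key1 hβ h0 hsol]; ring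

include hβ h0 h1 hsol in
lemma hf_nonpos : ∀ x ∈ Icc (0:ℝ) mstar, hf β x ≤ 0 := by
  intro x hx
  set c := Real.sqrt (1 - 1/β) with hc
  have hc0 : 0 ≤ c := Real.sqrt_nonneg _
  have hcm : c ≤ mstar := c_le_mstar hβ h0 h1 hsol
  rcases le_total x c with hxc | hxc
  · have := hf_anti hβ (left_mem_Icc.mpr hc0) ⟨hx.1, hxc⟩ hx.1
    have h00 : hf β 0 = 0 := by simp [hf, Lfun]
    linarith
  · have := hf_mono hβ h1 (a := x) (b := mstar) ⟨hxc, hx.2⟩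
      (right_mem_Icc.mpr hcm) hx.2
    rw [hf_star_zero hβ h0 hsol] at this
    exact this

include hβ h0 h1 hsol in
lemma hf_ge_mono : ∀ x y : ℝ, mstar ≤ x → x ≤ y → y < 1 → hf β x ≤ hf β y := by
  intro x y hx hxy hy
  have hcm : Real.sqrt (1 - 1/β) ≤ mstar := c_le_mstar hβ h0 h1 hsol
  exact hf_mono hβ hy ⟨by linarith, hxy⟩ ⟨by linarith, le_refl y⟩ hxy

include hβ h0 h1 hsol in
lemma hf_nonneg : ∀ x : ℝ, mstar ≤ x → x < 1 → 0 ≤ hf β x := by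
  intro x hx hx1
  have := hf_ge_mono hβ h0 h1 hsol mstar x (le_refl _) hx hx1
  rw [hf_star_zero hβ h0 hsol] at this
  exact this

include hβ in
lemma mffe_contOn {a b : ℝ} (ha : -1 < a) (hb : b < 1) :
    ContinuousOn (meanFieldFreeEnergy β) (Icc a b) := by
  intro x hx
  exact (hasDerivAt_mffe (by linarith) (by linarith [hx.1])
    (by linarith [hx.2])).continuousAt.continuousWithinAt

include hβ h0 h1 hsol in
lemma g_min : ∀ x : ℝ, -1 < x → x < 1 →
    meanFieldFreeEnergy β mstar ≤ meanFieldFreeEnergy β x := by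
  have key : ∀ x : ℝ, 0 ≤ x → x < 1 →
      meanFieldFreeEnergy β mstar ≤ meanFieldFreeEnergy β x := by
    intro x hx0 hx1
    rcases le_total x mstar with hxm | hxm
    · have hanti : AntitoneOn (meanFieldFreeEnergy β) (Icc 0 mstar) := by
        apply antitoneOn_of_deriv_nonpos (convex_Icc 0 mstar)
          (mffe_contOn hβ (by norm_num) h1)
        · intro y hy
          rw [interior_Icc] at hy
          exact (hasDerivAt_mffe (by linarith) (by linarith [hy.1])
            (by linarith [hy.2])).differentiableAt.differentiableWithinAt
        · intro y hy
          rw [interior_Icc] at hy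
          rw [(hasDerivAt_mffe (by linarith) (by linarith [hy.1]) (by linarith [hy.2])).deriv,
            gdf_eq (by linarith)]
          have := hf_nonpos hβ h0 h1 hsol y ⟨hy.1.le, hy.2.le⟩
          have h2β : 0 < 2 * β := by linarith
          exact div_nonpos_of_nonpos_of_nonneg this h2β.le
      exact hanti ⟨hx0, hxm⟩ (right_mem_Icc.mpr h0.le) hxm
    · have hmono : MonotoneOn (meanFieldFreeEnergy β) (Icc mstar x) := by
        apply monotoneOn_of_deriv_nonneg (convex_Icc mstar x)
          (mffe_contOn hβ (by linarith) hx1)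
        · intro y hy
          rw [interior_Icc] at hy
          exact (hasDerivAt_mffe (by linarith) (by linarith [hy.1])
            (by linarith [hy.2])).differentiableAt.differentiableWithinAt
        · intro y hy
          rw [interior_Icc] at hy
          rw [(hasDerivAt_mffe (by linarith) (by linarith [hy.1]) (by linarith [hy.2])).deriv,
            gdf_eq (by linarith)]
          have := hf_nonneg hβ h0 h1 hsol y hy.1.le (by linarith [hy.2])
          positivity
      exact hmono (left_mem_Icc.mpr hxm) ⟨hxm, le_refl x⟩ hxm
  intro x hx1 hx2
  rcases le_total 0 x with hx0 | hx0
  · exact key x hx0 hx2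
  · rw [← mffe_neg β x]
    exact key (-x) (by linarith) (by linarith)

include hβ h0 h1 hsol in
lemma tangent_le {m : ℝ} (hm : mstar ≤ m) (hm1 : m < 1) :
    ∀ x : ℝ, -1 < x → x < 1 →
      meanFieldFreeEnergy β m + gdf β m * (x - m) ≤ meanFieldFreeEnergy β x := by
  set g := meanFieldFreeEnergy β with hg
  set cm := gdf β m with hcm
  -- ψ y = g y - cm * y
  have hψd : ∀ y : ℝ, -1 < y → y < 1 →
      HasDerivAt (fun y => g y - cm * y) (gdf β y - cm) y := by
    intro y hy1 hy2
    exact (hasDerivAt_mffe (by linarith) hy1 hy2).sub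
      (by simpa using (hasDerivAt_id y).const_mul cm)
  have hψcont : ∀ a b : ℝ, -1 < a → b < 1 → ContinuousOn (fun y => g y - cm * y) (Icc a b) := by
    intro a b ha hb x hx
    exact ((hψd x (by linarith [hx.1]) (by linarith [hx.2])).continuousAt).continuousWithinAt
  -- step: on [mstar, 1), ψ has minimum at m
  have step : ∀ x : ℝ, mstar ≤ x → x < 1 → g m - cm * m ≤ g x - cm * x := by
    intro x hx hx1
    rcases le_total x m with hxm | hxm
    · have hanti : AntitoneOn (fun y => g y - cm * y) (Icc x m) := by
        apply antitoneOn_of_deriv_nonpos (convex_Icc x m) (hψcont x m (by linarith) hm1)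
        · intro y hy
          rw [interior_Icc] at hy
          exact (hψd y (by linarith [hy.1]) (by linarith [hy.2])).differentiableAt.differentiableWithinAt
        · intro y hy
          rw [interior_Icc] at hy
          rw [(hψd y (by linarith [hy.1]) (by linarith [hy.2])).deriv, hcm,
            gdf_eq (by linarith), gdf_eq (by linarith), sub_nonpos]
          have := hf_ge_mono hβ h0 h1 hsol y m (by linarith [hy.1]) hy.2.le hm1
          have h2β : (0:ℝ) < 2 * β := by linarith
          exact (div_le_div_iff_of_pos_right h2β).mpr this
      exact hanti (left_mem_Icc.mpr hxm) (right_mem_Icc.mpr hxm) hxm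
    · have hmono : MonotoneOn (fun y => g y - cm * y) (Icc m x) := by
        apply monotoneOn_of_deriv_nonneg (convex_Icc m x) (hψcont m x (by linarith) hx1)
        · intro y hy
          rw [interior_Icc] at hy
          exact (hψd y (by linarith [hy.1]) (by linarith [hy.2])).differentiableAt.differentiableWithinAt
        · intro y hy
          rw [interior_Icc] at hy
          rw [(hψd y (by linarith [hy.1]) (by linarith [hy.2])).deriv, hcm,
            gdf_eq (by linarith), gdf_eq (by linarith), sub_nonneg]
          have := hf_ge_mono hβ h0 h1 hsol m y hm hy.1.le (by linarith [hy.2])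
          have h2β : (0:ℝ) < 2 * β := by linarith
          exact (div_le_div_iff_of_pos_right h2β).mpr this
      exact hmono (left_mem_Icc.mpr hxm) (right_mem_Icc.mpr hxm) hxm
  intro x hx1 hx2
  rcases le_or_gt mstar x with hxm | hxm
  · have := step x hxm hx2
    linarith [this]  -- g m + cm*(x-m) ≤ g x
  · -- x < mstar
    have hcm0 : 0 ≤ cm := by
      rw [hcm, gdf_eq (by linarith)]
      have := hf_nonneg hβ h0 h1 hsol m hm hm1
      positivity
    have hstar := step mstar (le_refl _) h1
    have hmin := g_min hβ h0 h1 hsol x hx1 hx2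
    nlinarith [mul_le_mul_of_nonneg_left (le_of_lt hxm) hcm0]

end Main
section MainThm

theorem convex_envelope_flat_on_plateau (β : ℝ) (hβ : 1 < β)
    (mstar : ℝ) (hmem : mstar ∈ Set.Ioo (0 : ℝ) 1)
    (hsol : mstar = Real.tanh (β * mstar)) :
    (∀ m ∈ Set.Icc (-mstar) mstar, convexEnvelope β m = meanFieldFreeEnergy β mstar) ∧
    (∀ m ∈ Set.Ioo (-1 : ℝ) 1, mstar ≤ |m| →
      convexEnvelope β m = meanFieldFreeEnergy β m) := by
  obtain ⟨h0, h1⟩ := hmem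
  have hβ0 : (0:ℝ) < β := by linarith
  have hmIoo : mstar ∈ Set.Ioo (-1:ℝ) 1 := ⟨by linarith, h1⟩
  have hmIoo' : -mstar ∈ Set.Ioo (-1:ℝ) 1 := ⟨by linarith, by linarith⟩
  constructor
  · intro m hm
    have hmI : m ∈ Set.Ioo (-1:ℝ) 1 := ⟨by linarith [hm.1], by linarith [hm.2]⟩
    unfold convexEnvelope
    apply IsGreatest.csSup_eq
    constructor
    · exact ⟨fun _ => meanFieldFreeEnergy β mstar, convexOn_const _ (convex_Ioo _ _),
        fun x hx => g_min hβ h0 h1 hsol x hx.1 hx.2, rfl⟩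
    · rintro y ⟨φ, hconv, hle, rfl⟩
      set a := (mstar - m)/(2*mstar) with ha_def
      set b := (mstar + m)/(2*mstar) with hb_def
      have ha : 0 ≤ a := by
        apply div_nonneg (by linarith [hm.2]) (by linarith)
      have hb : 0 ≤ b := by
        apply div_nonneg (by linarith [hm.1]) (by linarith)
      have hab : a + b = 1 := by
        rw [ha_def, hb_def]; field_simp; ring
      have hcomb : a • (-mstar) + b • mstar = m := by
        simp only [smul_eq_mul]; rw [ha_def, hb_def]; field_simp; ring
      have h2 := hconv.2 hmIoo' hmIoo ha hb hab
      rw [hcomb] at h2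
      simp only [smul_eq_mul] at h2
      have hφ1 : φ (-mstar) ≤ meanFieldFreeEnergy β mstar := by
        rw [← mffe_neg β mstar]; exact hle _ hmIoo'
      have hφ2 : φ mstar ≤ meanFieldFreeEnergy β mstar := hle _ hmIoo
      calc φ m ≤ a * φ (-mstar) + b * φ mstar := h2
        _ ≤ a * meanFieldFreeEnergy β mstar + b * meanFieldFreeEnergy β mstar := by
            apply add_le_add (mul_le_mul_of_nonneg_left hφ1 ha)
              (mul_le_mul_of_nonneg_left hφ2 hb)
        _ = meanFieldFreeEnergy β mstar := by rw [← add_mul, hab, one_mul]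
  · intro m hmI habs
    have upper : ∀ y ∈ {y : ℝ | ∃ φ : ℝ → ℝ, ConvexOn ℝ (Set.Ioo (-1 : ℝ) 1) φ ∧
        (∀ x ∈ Set.Ioo (-1 : ℝ) 1, φ x ≤ meanFieldFreeEnergy β x) ∧ y = φ m},
        y ≤ meanFieldFreeEnergy β m := by
      rintro y ⟨φ, hconv, hle, rfl⟩
      exact hle m hmI
    unfold convexEnvelope
    apply IsGreatest.csSup_eq
    refine ⟨?_, upper⟩
    rcases le_total 0 m with hm0 | hm0
    · rw [abs_of_nonneg hm0] at habs
      refine ⟨fun x => meanFieldFreeEnergy β m + gdf β m * (x - m), ?_, ?_, by simp⟩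
      · refine ⟨convex_Ioo _ _, ?_⟩
        intro x hx y hy a b ha hb hab
        have hb' : b = 1 - a := by linarith
        subst hb'
        simp only [smul_eq_mul]
        apply le_of_eq
        ring
      · intro x hx
        exact tangent_le hβ h0 h1 hsol habs hmI.2 x hx.1 hx.2
    · rw [abs_of_nonpos hm0] at habs
      have hn1 : -m < 1 := by linarith [hmI.1]
      refine ⟨fun x => meanFieldFreeEnergy β (-m) + gdf β (-m) * (-x - (-m)), ?_, ?_, ?_⟩
      · refine ⟨convex_Ioo _ _, ?_⟩
        intro x hx y hy a b ha hb hab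
        have hb' : b = 1 - a := by linarith
        subst hb'
        simp only [smul_eq_mul]
        apply le_of_eq
        ring
      · intro x hx
        have := tangent_le hβ h0 h1 hsol habs hn1 (-x) (by linarith [hx.2]) (by linarith [hx.1])
        rwa [mffe_neg β x] at this
      · rw [mffe_neg β m]; simp

end MainThm
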